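/- For any formula A of the bimodal language L₂, if GR• ⊢ A, then A is valid on all ■-serial GR°-frames. -/
import Mathlib


/-- Formulas of the bimodal language `L₂`: countably many propositional
variables, `⊥`, `¬`, `∨`, and two modal operators `□` (`box`) and `■` (`bb`). -/
inductive Formula : Type
  | var : ℕ → Formula
  | falsum : Formula
  | neg : Formula → Formula
  | or : Formula → Formula → Formula
  | box : Formula → Formula
  | bb : Formula → Formula

namespace Formula

/-- `A → B` is defined as `¬A ∨ B`. -/
def imp (A B : Formula) : Formula := (A.neg).or B

/-- `A ∧ B` is defined as `¬(¬A ∨ ¬B)`. -/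
def and (A B : Formula) : Formula := ((A.neg).or B.neg).neg

/-- `◇A` abbreviates `¬□¬A`. -/
def dia (A : Formula) : Formula := ((A.neg).box).neg

end Formula

/-- Propositional evaluation: variables and formulas of the form `□A`, `■A`
are treated as atoms whose truth value is given by `v`. -/
def evalProp (v : Formula → Bool) : Formula → Bool
  | .var n => v (.var n)
  | .falsum => false
  | .neg A => !(evalProp v A)
  | .or A B => evalProp v A || evalProp v B
  | .box A => v (.box A)
  | .bb A => v (.bb A)

/-- Propositional tautologies of the bimodal language `L₂`. -/
def Taut (A : Formula) : Prop := ∀ v : Formula → Bool, evalProp v A = true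

/-- The logic GRbullet. -/
inductive GRbullet : Formula → Prop
  | taut {A : Formula} : Taut A → GRbullet A
  | k {A B : Formula} : GRbullet (((A.imp B).box).imp ((A.box).imp (B.box)))
  | loeb {A : Formula} : GRbullet ((((A.box).imp A).box).imp (A.box))
  | bbBox {A : Formula} : GRbullet ((A.bb).imp (A.box))
  | boxBb {A : Formula} : GRbullet ((A.box).imp ((A.bb).box))
  | ros {A : Formula} : GRbullet ((A.box).imp ((Formula.falsum.box).or (A.bb)))
  | diaBb {A : Formula} : GRbullet (((A.bb).dia).imp (A.dia))
  | mp {A B : Formula} : GRbullet (A.imp B) → GRbullet A → GRbullet B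
  | nec {A : Formula} : GRbullet A → GRbullet (A.box)
  | bbnec {A : Formula} : GRbullet A → GRbullet (A.bb)
  | rosser {A : Formula} : GRbullet (A.neg) → GRbullet ((A.bb).neg)

/-- A `GR°`-frame: a nonempty set of worlds `W`, a transitive conversely
well-founded relation `⊏` (`lt`), and for each formula `B` a relation
`≺_B` (`prec B`) satisfying the four frame conditions. -/
structure GRFrame where
  W : Type
  nonempty : Nonempty W
  lt : W → W → Prop
  lt_trans : ∀ {x y z : W}, lt x y → lt y z → lt x z
  /-- `⊏` is conversely well-founded. -/
  cwf : WellFounded (fun x y : W => lt y x)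
  prec : Formula → W → W → Prop
  lt_to_prec : ∀ {B : Formula} {x y : W}, lt x y → prec B x y
  lt_prec_lt : ∀ {B : Formula} {x y z : W}, lt x y → prec B y z → lt x z
  prec_lt_lt : ∀ {B : Formula} {x y z : W}, prec B x y → lt x z → lt x y
  lt_succ : ∀ {B : Formula} {x y : W}, lt x y → ∃ z : W, prec B y z ∧ lt x z

/-- A satisfaction relation on a `GR°`-frame. -/
structure GRSat (F : GRFrame) where
  frc : F.W → Formula → Prop
  frc_falsum : ∀ w : F.W, ¬ frc w Formula.falsum
  frc_neg : ∀ (w : F.W) (A : Formula), frc w A.neg ↔ ¬ frc w A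
  frc_or : ∀ (w : F.W) (A B : Formula), frc w (A.or B) ↔ (frc w A ∨ frc w B)
  frc_box : ∀ (w : F.W) (B : Formula), frc w B.box ↔ ∀ x : F.W, F.lt w x → frc x B
  frc_bb : ∀ (w : F.W) (B : Formula), frc w B.bb ↔ ∀ x : F.W, F.prec B w x → frc x B

/-- `A` is valid on the frame `F`: it holds at every world under every
satisfaction relation on `F`. -/
def ValidOn (F : GRFrame) (A : Formula) : Prop :=
  ∀ (S : GRSat F) (w : F.W), S.frc w A

/-- A frame is non-trivial iff it has a root `r` (w.r.t. `⊏`) and some world `w ≠ r`. -/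
def GRFrame.NonTrivial (F : GRFrame) : Prop :=
  ∃ r w : F.W, (∀ x : F.W, x ≠ r → F.lt r x) ∧ r ≠ w

/-- A frame is `■`-serial iff every `≺_B` is serial. -/
def GRFrame.Serial (F : GRFrame) : Prop :=
  ∀ (B : Formula) (x : F.W), ∃ y : F.W, F.prec B x y


open Classical in
lemma frc_imp {F : GRFrame} (S : GRSat F) (w : F.W) (A B : Formula) :
    S.frc w (A.imp B) ↔ (S.frc w A → S.frc w B) := by
  rw [Formula.imp, S.frc_or, S.frc_neg]
  tauto

open Classical in
lemma eval_frc {F : GRFrame} (S : GRSat F) (w : F.W) (B : Formula) :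
    evalProp (fun C => decide (S.frc w C)) B = true ↔ S.frc w B := by
  induction B with
  | var n => simp [evalProp]
  | falsum => simpa [evalProp] using S.frc_falsum w
  | neg A ih => rw [S.frc_neg]; simp [evalProp, ← ih, Bool.not_eq_true]
  | or A B ihA ihB => rw [S.frc_or]; simp [evalProp, ihA, ihB]
  | box A _ => simp [evalProp]
  | bb A _ => simp [evalProp]

/-- Every theorem of `GR•` is valid on all `■`-serial `GR°`-frames. -/
theorem GRbullet_sound_serial (A : Formula) (h : GRbullet A) :
    ∀ F : GRFrame, F.Serial → ValidOn F A := by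
  induction h with
  | @taut A hA =>
    intro F _ S w
    classical
    have := hA (fun C => decide (S.frc w C))
    exact (eval_frc S w A).mp this
  | @k A B =>
    intro F _ S w
    rw [frc_imp, frc_imp, S.frc_box]
    intro h1 h2
    rw [S.frc_box] at h2 ⊢
    intro x hx
    exact (frc_imp S x A B).mp (h1 x hx) (h2 x hx)
  | @loeb A =>
    intro F _ S w
    rw [frc_imp, S.frc_box, S.frc_box]
    intro h1
    intro x hx
    induction x using WellFounded.induction F.cwf with
    | _ x ih =>
      refine (frc_imp S x (A.box) A).mp (h1 x hx) ?_
      rw [S.frc_box]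
      intro y hy
      exact ih y hy (F.lt_trans hx hy)
  | @bbBox A =>
    intro F _ S w
    rw [frc_imp, S.frc_bb, S.frc_box]
    intro h1 x hx
    exact h1 x (F.lt_to_prec hx)
  | @boxBb A =>
    intro F _ S w
    rw [frc_imp, S.frc_box, S.frc_box]
    intro h1 x hx
    rw [S.frc_bb]
    intro y hy
    exact h1 y (F.lt_prec_lt hx hy)
  | @ros A =>
    intro F _ S w
    rw [frc_imp, S.frc_or]
    intro h1
    by_cases hb : S.frc w (Formula.falsum.box)
    · exact Or.inl hb
    · right
      rw [S.frc_bb]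
      intro y hy
      rw [S.frc_box] at h1
      refine h1 y ?_
      rw [S.frc_box] at hb
      push_neg at hb
      obtain ⟨x, hx, -⟩ := hb
      exact F.prec_lt_lt hy hx
  | @diaBb A =>
    intro F _ S w
    rw [frc_imp]
    intro h1
    rw [Formula.dia, S.frc_neg, S.frc_box] at h1 ⊢
    push_neg at h1 ⊢
    obtain ⟨x, hx, hbb⟩ := h1
    rw [S.frc_neg] at hbb
    push_neg at hbb
    obtain ⟨z, hz1, hz2⟩ := F.lt_succ (B := A) hx
    refine ⟨z, hz2, ?_⟩
    rw [S.frc_neg]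
    push_neg
    exact (S.frc_bb x A).mp hbb z hz1
  | @mp A B _ _ ih1 ih2 =>
    intro F hs S w
    exact (frc_imp S w A B).mp (ih1 F hs S w) (ih2 F hs S w)
  | @nec A _ ih =>
    intro F hs S w
    rw [S.frc_box]
    intro x _
    exact ih F hs S x
  | @bbnec A _ ih =>
    intro F hs S w
    rw [S.frc_bb]
    intro x _
    exact ih F hs S x
  | @rosser A _ ih =>
    intro F hs S w
    rw [S.frc_neg, S.frc_bb]
    intro hbb
    obtain ⟨y, hy⟩ := hs A w
    have := ih F hs S y
    rw [S.frc_neg] at this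
    exact this (hbb y hy)
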